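/- Let l = (l_1,…,l_N) be a vector of positive integers and B = B(a_1,…,a_N) an l-shifted Ferrers board contained in B_N^l. Then m_N^{(l)}(q;B) = ∏_{i=1}^{N} [a_{N−i+1} − 2i + 2]_q. In particular, for the full l-shifted board B_N^l (corresponding to a_i = L_{N−i+1}), m_N^{(l)}(q;B_N^l) = ∏_{i=1}^{N} [L_i − 2i + 2]_q. -/

import Mathlib

open scoped BigOperators Classical

noncomputable section
namespace EllRook

/-- Modified Jacobi theta function `θ(x;p)`. -/
def theta (x p : ℂ) : ℂ := ∏' j : ℕ, ((1 - p ^ j * x) * (1 - p ^ (j + 1) / x))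

/-- Elliptic small weight `w_{a,b;q,p}(k)`. -/
def ew (a b q p : ℂ) (k : ℤ) : ℂ :=
  q * (theta (a * q ^ (2 * k + 1)) p * theta (b * q ^ k) p * theta (a * q ^ (k - 2) / b) p) /
    (theta (a * q ^ (2 * k - 1)) p * theta (b * q ^ (k + 2)) p * theta (a * q ^ k / b) p)

/-- Elliptic big weight `W_{a,b;q,p}(k)`. -/
def eW (a b q p : ℂ) (k : ℤ) : ℂ :=
  q ^ k *
      (theta (a * q ^ (1 + 2 * k)) p * theta (b * q) p * theta (b * q ^ (2 : ℤ)) p *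
        theta (a * q ^ (-1 : ℤ) / b) p * theta (a / b) p) /
    (theta (a * q) p * theta (b * q ^ (k + 1)) p * theta (b * q ^ (k + 2)) p *
      theta (a * q ^ (k - 1) / b) p * theta (a * q ^ k / b) p)

/-- Elliptic number `[m]_{a,b;q,p}`. -/
def en (a b q p : ℂ) (m : ℤ) : ℂ :=
  (theta (q ^ m) p * theta (a * q ^ m) p * theta (b * q ^ (2 : ℤ)) p * theta (a / b) p) /
    (theta q p * theta (a * q) p * theta (b * q ^ (m + 1)) p * theta (a * q ^ (m - 1) / b) p)

/-- The q-number `[m]_q` for an integer `m`. -/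
def qInt (q : ℂ) (m : ℤ) : ℂ := (1 - q ^ m) / (1 - q)

/-- The Q-shifted factorial `(x;Q)_m`. -/
def qPoch (x Q : ℂ) (m : ℕ) : ℂ := ∏ i ∈ Finset.range m, (1 - x * Q ^ i)

/-- The q-binomial coefficient. -/
def qBinom (q : ℂ) (n k : ℕ) : ℂ :=
  ∏ i ∈ Finset.Icc 1 k, (1 - q ^ ((n : ℤ) - (k : ℤ) + (i : ℤ))) / (1 - q ^ (i : ℤ))

/-- The a;q-number `[m]_{x;q}`. -/
def aqNum (x q : ℂ) (m : ℤ) : ℂ :=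
  q ^ (1 - m) * (1 - q ^ m) * (1 - x * q ^ m) / ((1 - q) * (1 - x * q))

/-- The a;q big weight `W_{x;q}(k)`. -/
def aqW (x q : ℂ) (k : ℤ) : ℂ := q ^ (-k) * (1 - x * q ^ (1 + 2 * k)) / (1 - x * q)

/-- The a;q small weight `w_{a;q}(k)`. -/
def waq (a q : ℂ) (k : ℤ) : ℂ := q⁻¹ * (1 - a * q ^ (2 * k + 1)) / (1 - a * q ^ (2 * k - 1))

/-! Ferrers boards and file placements (alpha-parameter model).
Cells are written `(i, j)` for column `i` (from the left) and row `j` (from the bottom),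
both `1`-indexed. -/

/-- The board `B(h 1, …, h n)`: cells `(i,j)` with `1 ≤ i ≤ n`, `1 ≤ j ≤ h i`. -/
def ferrers (n : ℕ) (h : ℕ → ℕ) : Finset (ℕ × ℕ) :=
  ((Finset.Icc 1 n) ×ˢ (Finset.Icc 1 ((Finset.Icc 1 n).sup h))).filter fun c => c.2 ≤ h c.1

/-- `k`-file placements on a board: `k` cells, at most one per column. -/
def filePl (B : Finset (ℕ × ℕ)) (k : ℕ) : Finset (Finset (ℕ × ℕ)) :=
  B.powerset.filter fun P => P.card = k ∧ ∀ c ∈ P, ∀ d ∈ P, c.1 = d.1 → c = d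

/-- `v(c)`: number of cells of `P` strictly to the left of `c` in the same row. -/
def vP (P : Finset (ℕ × ℕ)) (c : ℕ × ℕ) : ℕ := (P.filter fun d => d.1 < c.1 ∧ d.2 = c.2).card

/-- `r_c(P)`: number of cells of `P` strictly to the left of and strictly above `c`. -/
def rcP (P : Finset (ℕ × ℕ)) (c : ℕ × ℕ) : ℕ := (P.filter fun d => d.1 < c.1 ∧ c.2 < d.2).card

/-- Elliptic weight of a cell in the alpha-parameter model. -/
def cellWt (a b q p : ℂ) (α : ℤ) (P : Finset (ℕ × ℕ)) (c : ℕ × ℕ) : ℂ :=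
  if ∃ d ∈ P, d.1 = c.1 ∧ c.2 < d.2 then 1
  else
    if c ∈ P then
      en (a * q ^ (2 * (-(c.2 : ℤ) + (α - 1) * (1 - (c.1 : ℤ) + (rcP P c : ℤ)))))
        (b * q ^ (-(c.2 : ℤ) + (α - 1) * (1 - (c.1 : ℤ) + (rcP P c : ℤ)))) q p
        ((α - 1) * (vP P c : ℤ) + 1)
    else
      eW (a * q ^ (2 * (-(c.2 : ℤ) + (α - 1) * (1 - (c.1 : ℤ) + (rcP P c : ℤ)))))
        (b * q ^ (-(c.2 : ℤ) + (α - 1) * (1 - (c.1 : ℤ) + (rcP P c : ℤ)))) q p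
        ((α - 1) * (vP P c : ℤ) + 1)

/-- The elliptic alpha-parameter rook number `r_k^{(α)}(a,b;q,p;B)` for the board with
`n` columns of heights `h 1, …, h n`; it is `0` for `k < 0`. -/
def rAlpha (a b q p : ℂ) (α : ℤ) (n : ℕ) (h : ℕ → ℕ) (k : ℤ) : ℂ :=
  if 0 ≤ k then
    ∑ P ∈ filePl (ferrers n h) k.toNat, ∏ c ∈ ferrers n h, cellWt a b q p α P c
  else 0

/-- q-weight of a cell in the alpha-parameter model. -/
def qCellWt (q : ℂ) (α : ℤ) (P : Finset (ℕ × ℕ)) (c : ℕ × ℕ) : ℂ :=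
  if ∃ d ∈ P, d.1 = c.1 ∧ c.2 < d.2 then 1
  else if c ∈ P then qInt q ((α - 1) * (vP P c : ℤ) + 1)
  else q ^ ((α - 1) * (vP P c : ℤ) + 1)

/-- The q-analogue `R_k^{(α)}(q;B)` of the alpha-parameter rook numbers. -/
def Rq (q : ℂ) (α : ℤ) (n : ℕ) (h : ℕ → ℕ) (k : ℕ) : ℂ :=
  ∑ P ∈ filePl (ferrers n h) k, ∏ c ∈ ferrers n h, qCellWt q α P c

/-- a;q-weight of a cell in the α = 2 model. -/
def aqCellWt (a q : ℂ) (P : Finset (ℕ × ℕ)) (c : ℕ × ℕ) : ℂ :=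
  if ∃ d ∈ P, d.1 = c.1 ∧ c.2 < d.2 then 1
  else
    if c ∈ P then
      aqNum (a * q ^ (2 * (-(c.2 : ℤ) + 1 - (c.1 : ℤ) + (rcP P c : ℤ)))) q ((vP P c : ℤ) + 1)
    else
      aqW (a * q ^ (2 * (-(c.2 : ℤ) + 1 - (c.1 : ℤ) + (rcP P c : ℤ)))) q ((vP P c : ℤ) + 1)

/-- Heights of the staircase board `St_n = B(0,1,…,n-1)`. -/
def stH : ℕ → ℕ := fun i => i - 1

/-- `r_k^{(2)}(a,q;St_n)`. -/
def r2aq (a q : ℂ) (n k : ℕ) : ℂ :=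
  ∑ P ∈ filePl (ferrers n stH) k, ∏ c ∈ ferrers n stH, aqCellWt a q P c

/-- The 2-creation rook number `r_k^{(2)}(St_n)` of the staircase board. -/
def r2Nat (n k : ℕ) : ℕ :=
  ∑ P ∈ filePl (ferrers n stH) k,
    ∏ r ∈ Finset.Icc 1 n, (P.filter fun c => c.2 = r).card.factorial

/-! l-shifted boards and rook theory for matchings.
Cells are written `(i, j)` for row `i` and column `j` in the original labelling. -/

/-- `L j = l 1 + ⋯ + l j`. -/
def Lsum (l : ℕ → ℕ) (j : ℕ) : ℕ := ∑ s ∈ Finset.Icc 1 j, l s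

/-- The l-shifted skyline/Ferrers board `B(A 1, …, A N) ⊆ B_N^l`. -/
def lFerrers (N : ℕ) (l A : ℕ → ℕ) : Finset (ℕ × ℕ) :=
  (Finset.Icc 1 N).biUnion fun i =>
    (Finset.Icc 1 (A i)).image fun j =>
      (Lsum l N - Lsum l (N - i + 1) + 1, Lsum l N - Lsum l (N - i + 1) + 1 + j)

/-- Nonattacking condition for rook placements on shifted boards. -/
def nonatt (P : Finset (ℕ × ℕ)) : Prop :=
  ∀ c ∈ P, ∀ d ∈ P, c ≠ d → c.1 ≠ d.1 ∧ c.2 ≠ d.2 ∧ c.2 ≠ d.1 ∧ d.2 ≠ c.1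

/-- `M_k(B)`: placements of `k` nonattacking rooks on `B`. -/
def Mk (B : Finset (ℕ × ℕ)) (k : ℕ) : Finset (Finset (ℕ × ℕ)) :=
  B.powerset.filter fun P => P.card = k ∧ nonatt P

/-- A rook at `(i,j) ∈ P` cancels the cells `(i,s)` with `i < s < j` and the cells
`(t,j)` and `(t,i)` with `t < i`. -/
def cancelled (P : Finset (ℕ × ℕ)) (c : ℕ × ℕ) : Prop :=
  ∃ d ∈ P, (d.1 = c.1 ∧ d.1 < c.2 ∧ c.2 < d.2) ∨ (c.1 < d.1 ∧ (c.2 = d.2 ∨ c.2 = d.1))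

/-- The cells of `B` neither in `P` nor cancelled by a rook of `P`. -/
def uncancelled (B P : Finset (ℕ × ℕ)) : Finset (ℕ × ℕ) :=
  B.filter fun c => c ∉ P ∧ ¬cancelled P c

/-- `m_k(q;B) = Σ_P q^{u_B(P)}`. -/
def mq (q : ℂ) (B : Finset (ℕ × ℕ)) (k : ℕ) : ℂ :=
  ∑ P ∈ Mk B k, q ^ (uncancelled B P).card

/-- The w-row (bottom-to-top index) of the original row labelled `r` in `B_N^l`:
rows are labelled `L_N + 1 - L_{i'}` for the w-row `i'`. -/
def wRow (N : ℕ) (l : ℕ → ℕ) (r : ℕ) : ℕ :=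
  ((Finset.Icc 1 N).filter fun t => Lsum l t ≤ Lsum l N + 1 - r).card

/-- Number of rooks south-east of `c` both of whose cancelled columns are to the right of
the w-column of `c` (in original coordinates: row and column larger than those of `c`,
and the rook's own row label, as a column, also larger than the column of `c`). -/
def rse (P : Finset (ℕ × ℕ)) (c : ℕ × ℕ) : ℕ :=
  (P.filter fun d => c.1 < d.1 ∧ c.2 < d.2 ∧ c.2 < d.1).card

/-- Number of rooks south-east of `c` exactly one of whose cancelled columns is to the
right of the w-column of `c`. -/
def sse (P : Finset (ℕ × ℕ)) (c : ℕ × ℕ) : ℕ :=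
  (P.filter fun d => c.1 < d.1 ∧ c.2 < d.2 ∧ d.1 ≤ c.2).card

/-- The elliptic matchings number `m_k^{(l)}(a,b;q,p;B)`: for a cell of `B_N^l`
in original coordinates `(r,c)`, its w-coordinates are `i = wRow N l r` and
`j = L_N + 2 - c`, and the uncancelled cells get the small weight with argument
`i + j - 1 - l i - 2 r_{(i,j)}(P) - s_{(i,j)}(P)`. -/
def mEll (a b q p : ℂ) (N : ℕ) (l : ℕ → ℕ) (B : Finset (ℕ × ℕ)) (k : ℕ) : ℂ :=
  ∑ P ∈ Mk B k, ∏ c ∈ uncancelled B P,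
    ew a b q p ((wRow N l c.1 : ℤ) + ((Lsum l N : ℤ) + 2 - (c.2 : ℤ)) - 1
      - (l (wRow N l c.1) : ℤ) - 2 * (rse P c : ℤ) - (sse P c : ℤ))

/-- The a;q-analogue `m_k(a,q;B)` of the matchings number. -/
def mAq (a q : ℂ) (N : ℕ) (l : ℕ → ℕ) (B : Finset (ℕ × ℕ)) (k : ℕ) : ℂ :=
  ∑ P ∈ Mk B k, ∏ c ∈ uncancelled B P,
    waq a q ((wRow N l c.1 : ℤ) + ((Lsum l N : ℤ) + 2 - (c.2 : ℤ)) - 1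
      - (l (wRow N l c.1) : ℤ) - 2 * (rse P c : ℤ) - (sse P c : ℤ))



/-! ### Auxiliary lemmas for `lazy_matching_top` -/

lemma qInt_zero (q : ℂ) : qInt q 0 = 0 := by simp [qInt]

lemma qInt_succ' (q : ℂ) (hq1 : q ≠ 1) (n : ℕ) : qInt q ((n : ℤ) + 1) = 1 + q * qInt q n := by
  have h : (1 : ℂ) - q ≠ 0 := by intro h; apply hq1; linear_combination -h
  rw [qInt, qInt, show ((n : ℤ) + 1) = ((n + 1 : ℕ) : ℤ) by push_cast; ring, zpow_natCast,
    zpow_natCast, pow_succ, mul_div_assoc', one_add_div h]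
  congr 1
  ring

lemma sumA (q : ℂ) (hq1 : q ≠ 1) (S : Finset ℕ) :
    ∑ j ∈ S, q ^ ((S.filter (fun x => j < x)).card) = qInt q S.card := by
  induction S using Finset.strongInduction with
  | _ S ih =>
    rcases S.eq_empty_or_nonempty with rfl | hS
    · simp [qInt]
    · set m := S.max' hS with hm
      have hmem := S.max'_mem hS
      have hE : S = insert m (S.erase m) := (Finset.insert_erase hmem).symm
      rw [hE, Finset.sum_insert (Finset.notMem_erase _ _), ← hE]
      have h0 : (S.filter (fun x => m < x)).card = 0 := by
        rw [Finset.card_eq_zero, Finset.filter_eq_empty_iff]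
        intro x hx
        exact not_lt.mpr (S.le_max' x hx)
      have hstep : ∀ j ∈ S.erase m, q ^ ((S.filter (fun x => j < x)).card)
          = q * q ^ (((S.erase m).filter (fun x => j < x)).card) := by
        intro j hj
        have hjm : j < m := lt_of_le_of_ne (S.le_max' j (Finset.mem_of_mem_erase hj))
          (Finset.ne_of_mem_erase hj)
        have hf : S.filter (fun x => j < x) = insert m ((S.erase m).filter (fun x => j < x)) := by
          conv_lhs => rw [hE]
          rw [Finset.filter_insert, if_pos hjm]
        rw [hf, Finset.card_insert_of_notMem (fun hc => Finset.notMem_erase m S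
          (Finset.mem_of_mem_filter _ hc)), pow_succ]
        ring
      rw [Finset.sum_congr rfl hstep, ← Finset.mul_sum,
        ih (S.erase m) (Finset.erase_ssubset hmem), h0]
      have hc : S.card = (S.erase m).card + 1 := by
        rw [Finset.card_erase_of_mem hmem]
        have := Finset.card_pos.mpr hS
        omega
      rw [hc]
      push_cast
      rw [qInt_succ' q hq1]
      simp

lemma Icc_insert {a b : ℕ} (h : a ≤ b) : Finset.Icc a b = insert a (Finset.Icc (a+1) b) := by
  rw [Finset.Icc_add_one_left_eq_Ioc]
  exact (Finset.Icc_erase_left a b ▸ Finset.insert_erase (Finset.mem_Icc.mpr ⟨le_refl _, h⟩)).symm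

/-- A single row of a shifted board: row label `r`, cells `(r, r+1), …, (r, r+m)`. -/
def rowB (r m : ℕ) : Finset (ℕ × ℕ) := (Finset.Icc 1 m).image fun j => (r, r + j)

lemma mem_rowB {r m : ℕ} {c : ℕ × ℕ} : c ∈ rowB r m ↔ c.1 = r ∧ r < c.2 ∧ c.2 ≤ r + m := by
  constructor
  · intro hc
    simp only [rowB, Finset.mem_image, Finset.mem_Icc] at hc
    obtain ⟨j, ⟨h1, h2⟩, rfl⟩ := hc
    refine ⟨rfl, by omega, by omega⟩
  · rintro ⟨h1, h2, h3⟩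
    simp only [rowB, Finset.mem_image, Finset.mem_Icc]
    refine ⟨c.2 - r, by omega, ?_⟩
    obtain ⟨c1, c2⟩ := c
    simp only [Prod.mk.injEq]
    simp only at h1 h2 h3
    omega

/-- The board consisting of rows `s+1, …, N` of a nested shifted row system. -/
def Bd (s N : ℕ) (ρ a : ℕ → ℕ) : Finset (ℕ × ℕ) :=
  (Finset.Icc (s+1) N).biUnion fun i => rowB (ρ i) (a i)

lemma mem_Mk {B P : Finset (ℕ × ℕ)} {k : ℕ} :
    P ∈ Mk B k ↔ P ⊆ B ∧ P.card = k ∧ nonatt P := by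
  simp [Mk, Finset.mem_filter, Finset.mem_powerset]

/-- Pigeonhole bound: a nonattacking placement has at most one rook per nonempty row. -/
lemma card_nonatt_le {s N : ℕ} {ρ a : ℕ → ℕ} (P : Finset (ℕ × ℕ))
    (hP : P ⊆ Bd s N ρ a) (hna : nonatt P) :
    P.card ≤ ((Finset.Icc (s+1) N).filter fun i => 1 ≤ a i).card := by
  have h1 : P.card = (P.image Prod.fst).card := by
    rw [Finset.card_image_of_injOn]
    intro c hc d hd h
    by_contra hne
    exact (hna c hc d hd hne).1 h
  have h2 : P.image Prod.fst ⊆ ((Finset.Icc (s+1) N).filter fun i => 1 ≤ a i).image ρ := by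
    intro x hx
    rw [Finset.mem_image] at hx
    obtain ⟨c, hc, rfl⟩ := hx
    have hcB := hP hc
    rw [Bd, Finset.mem_biUnion] at hcB
    obtain ⟨i, hi, hci⟩ := hcB
    obtain ⟨e1, e2, e3⟩ := mem_rowB.mp hci
    rw [Finset.mem_image]
    exact ⟨i, Finset.mem_filter.mpr ⟨hi, by omega⟩, e1.symm⟩
  calc P.card = (P.image Prod.fst).card := h1
    _ ≤ (((Finset.Icc (s+1) N).filter fun i => 1 ≤ a i).image ρ).card := Finset.card_le_card h2
    _ ≤ ((Finset.Icc (s+1) N).filter fun i => 1 ≤ a i).card := Finset.card_image_le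

/-- Columns attacked by a placement: all first and second coordinates. -/
def Fset (P : Finset (ℕ × ℕ)) : Finset ℕ := P.image Prod.fst ∪ P.image Prod.snd

/-- Available columns in the top row, given a placement on the lower rows. -/
def Av (r α : ℕ) (P : Finset (ℕ × ℕ)) : Finset ℕ := Finset.Icc (r+1) (r+α) \ Fset P

lemma mem_Av {r α : ℕ} {P : Finset (ℕ × ℕ)} {j : ℕ} :
    j ∈ Av r α P ↔ (r + 1 ≤ j ∧ j ≤ r + α) ∧ ∀ d ∈ P, d.1 ≠ j ∧ d.2 ≠ j := by
  simp only [Av, Finset.mem_sdiff, Finset.mem_Icc, Fset, Finset.mem_union, Finset.mem_image,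
    not_or, not_exists]
  constructor
  · rintro ⟨h1, h2, h3⟩
    push_neg at h2 h3
    exact ⟨h1, fun d hd => ⟨h2 d hd, h3 d hd⟩⟩
  · rintro ⟨h1, h2⟩
    refine ⟨h1, ?_, ?_⟩ <;> push_neg <;> intro d hd
    · exact (h2 d hd).1
    · exact (h2 d hd).2

/-- The key product formula for full placements on a nested shifted row system. -/
lemma core (q : ℂ) (hq1 : q ≠ 1) (N : ℕ) (ρ a : ℕ → ℕ)
    (hmono : ∀ i j, 1 ≤ i → i < j → j ≤ N → ρ i < ρ j)
    (hnest : ∀ i j, 1 ≤ i → i < j → j ≤ N → ρ j + a j ≤ ρ i + a i)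
    (hapos : ∀ i, 1 ≤ i → i ≤ N → 1 ≤ a i) :
    ∀ k s, s ≤ N → N - s = k →
      mq q (Bd s N ρ a) k
        = ∏ i ∈ Finset.Icc (s+1) N, qInt q ((a i : ℤ) - 2 * ((N : ℤ) - (i : ℤ))) := by
  intro k
  induction k with
  | zero =>
    intro s hsN hk
    have hIcc : Finset.Icc (s+1) N = ∅ := Finset.Icc_eq_empty (by omega)
    have hB : Bd s N ρ a = ∅ := by rw [Bd, hIcc]; rfl
    rw [hB, hIcc, Finset.prod_empty]
    simp only [mq, Mk, nonatt, uncancelled]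
    rw [Finset.powerset_empty]
    simp [Finset.filter_singleton]
  | succ k ih =>
    intro s hsN hk
    have hsN' : s + 1 ≤ N := by omega
    set r := ρ (s+1) with hr
    set α := a (s+1) with hα
    set B' := Bd (s+1) N ρ a with hB'
    have hBsplit : Bd s N ρ a = rowB r α ∪ B' := by
      rw [Bd, Icc_insert hsN', Finset.biUnion_insert]
      rfl
    have hB'cell : ∀ c ∈ B', r < c.1 ∧ c.1 < c.2 ∧ c.2 ≤ r + α := by
      intro c hc
      rw [hB', Bd, Finset.mem_biUnion] at hc
      obtain ⟨i, hi, hci⟩ := hc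
      rw [Finset.mem_Icc] at hi
      obtain ⟨e1, e2, e3⟩ := mem_rowB.mp hci
      have h1 : ρ (s+1) < ρ i := hmono (s+1) i (by omega) (by omega) hi.2
      have h2 : ρ i + a i ≤ ρ (s+1) + a (s+1) := hnest (s+1) i (by omega) (by omega) hi.2
      omega
    have hdisj : Disjoint (rowB r α) B' := by
      rw [Finset.disjoint_left]
      intro c hc hc'
      have h1 := (mem_rowB.mp hc).1
      have h2 := hB'cell c hc'
      omega
    have hB'fst : ∀ P' : Finset (ℕ × ℕ), P' ⊆ B' → ∀ c ∈ P', c.1 ≠ r := by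
      intro P' hsub c hc
      have := hB'cell c (hsub hc)
      omega
    -- every full placement has a rook in the top row
    have h_rookrow : ∀ P ∈ Mk (Bd s N ρ a) (k+1), ∃ c₁ ∈ P, c₁.1 = r := by
      intro P hP
      obtain ⟨hPB, hPcard, hPna⟩ := mem_Mk.mp hP
      by_contra hno
      push_neg at hno
      have hPB' : P ⊆ B' := by
        intro c hc
        have hc2 := hPB hc
        rw [hBsplit, Finset.mem_union] at hc2
        rcases hc2 with h | h
        · exact absurd (mem_rowB.mp h).1 (hno c hc)
        · exact h
      have h1 := card_nonatt_le P hPB' hPna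
      have h2 : ((Finset.Icc (s+1+1) N).filter fun i => 1 ≤ a i).card ≤ k :=
        le_trans (Finset.card_filter_le _ _) (by rw [Nat.card_Icc]; omega)
      omega
    -- decomposition of the set of placements
    have hdecomp : Mk (Bd s N ρ a) (k+1)
        = (Mk B' k).biUnion fun P' => (Av r α P').image fun j => insert (r, j) P' := by
      ext P
      constructor
      · intro hP
        obtain ⟨c₁, hc₁P, hc₁r⟩ := h_rookrow P hP
        obtain ⟨hPB, hPcard, hPna⟩ := mem_Mk.mp hP
        set P' := P.erase c₁ with hP'def
        have hP'sub : P' ⊆ B' := by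
          intro d hd
          have hdP := P.mem_of_mem_erase hd
          have hdB := hPB hdP
          rw [hBsplit, Finset.mem_union] at hdB
          rcases hdB with h | h
          · exfalso
            have hdr : d.1 = r := (mem_rowB.mp h).1
            have hne : c₁ ≠ d := (Finset.ne_of_mem_erase hd).symm
            exact (hPna c₁ hc₁P d hdP hne).1 (by rw [hc₁r, hdr])
          · exact h
        have hP'Mk : P' ∈ Mk B' k := by
          rw [mem_Mk]
          refine ⟨hP'sub, by rw [hP'def, Finset.card_erase_of_mem hc₁P, hPcard]; omega, ?_⟩
          intro c hc d hd hne
          exact hPna c (P.mem_of_mem_erase hc) d (P.mem_of_mem_erase hd) hne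
        rw [Finset.mem_biUnion]
        refine ⟨P', hP'Mk, ?_⟩
        rw [Finset.mem_image]
        refine ⟨c₁.2, ?_, ?_⟩
        · rw [mem_Av]
          have hc₁row : c₁ ∈ rowB r α := by
            have hm := hPB hc₁P
            rw [hBsplit, Finset.mem_union] at hm
            rcases hm with h | h
            · exact h
            · exact absurd hc₁r (by have := hB'cell c₁ h; omega)
          obtain ⟨e1, e2, e3⟩ := mem_rowB.mp hc₁row
          refine ⟨⟨by omega, by omega⟩, fun d hd => ?_⟩
          have hdP := P.mem_of_mem_erase hd
          have hne : c₁ ≠ d := (Finset.ne_of_mem_erase hd).symm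
          have h4 := hPna c₁ hc₁P d hdP hne
          exact ⟨fun h => h4.2.2.1 h.symm, fun h => h4.2.1 h.symm⟩
        · have he : (r, c₁.2) = c₁ := by rw [← hc₁r]
          rw [he, hP'def, Finset.insert_erase hc₁P]
      · intro hP
        rw [Finset.mem_biUnion] at hP
        obtain ⟨P', hP'Mk, hPim⟩ := hP
        rw [Finset.mem_image] at hPim
        obtain ⟨j, hjAv, rfl⟩ := hPim
        obtain ⟨hP'B, hP'card, hP'na⟩ := mem_Mk.mp hP'Mk
        rw [mem_Av] at hjAv
        obtain ⟨⟨hj1, hj2⟩, hjF⟩ := hjAv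
        have hrj : (r, j) ∉ P' := fun h => hB'fst P' hP'B _ h rfl
        rw [mem_Mk]
        refine ⟨?_, ?_, ?_⟩
        · intro c hc
          rw [Finset.mem_insert] at hc
          rw [hBsplit, Finset.mem_union]
          rcases hc with rfl | hc
          · exact Or.inl (mem_rowB.mpr ⟨rfl, by omega, by omega⟩)
          · exact Or.inr (hP'B hc)
        · rw [Finset.card_insert_of_notMem hrj, hP'card]
        · intro c hc d hd hne
          rw [Finset.mem_insert] at hc hd
          rcases hc with rfl | hc <;> rcases hd with rfl | hd
          · exact absurd rfl hne
          · have hdc := hB'cell d (hP'B hd)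
            have hdF := hjF d hd
            refine ⟨?_, ?_, ?_, ?_⟩
            · show r ≠ d.1; omega
            · show j ≠ d.2; exact fun h => hdF.2 h.symm
            · show j ≠ d.1; exact fun h => hdF.1 h.symm
            · show d.2 ≠ r; omega
          · have hcc := hB'cell c (hP'B hc)
            have hcF := hjF c hc
            refine ⟨?_, ?_, ?_, ?_⟩
            · show c.1 ≠ r; omega
            · show c.2 ≠ j; exact hcF.2
            · show c.2 ≠ r; omega
            · show j ≠ c.1; exact fun h => hcF.1 h.symm
          · exact hP'na c hc d hd hne
    -- removing the top-row rook
    have hkey : ∀ P' : Finset (ℕ × ℕ), P' ⊆ B' → ∀ j,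
        ((insert (r, j) P').filter fun c => c.1 ≠ r) = P' := by
      intro P' hsub j
      ext c
      rw [Finset.mem_filter, Finset.mem_insert]
      constructor
      · rintro ⟨rfl | hc, hcr⟩
        · exact absurd rfl hcr
        · exact hc
      · intro hc
        exact ⟨Or.inr hc, hB'fst P' hsub c hc⟩
    have hpair : ∀ P₁ ∈ (Mk B' k : Finset (Finset (ℕ × ℕ))), ∀ P₂ ∈ (Mk B' k : Finset (Finset (ℕ × ℕ))),
        P₁ ≠ P₂ → Disjoint ((Av r α P₁).image fun j => insert (r, j) P₁)
          ((Av r α P₂).image fun j => insert (r, j) P₂) := by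
      intro P1 h1 P2 h2 hne
      rw [Finset.disjoint_left]
      intro P hPa hPb
      rw [Finset.mem_image] at hPa hPb
      obtain ⟨j1, _, rfl⟩ := hPa
      obtain ⟨j2, _, h⟩ := hPb
      apply hne
      have e1 := hkey P1 (mem_Mk.mp h1).1 j1
      have e2 := hkey P2 (mem_Mk.mp h2).1 j2
      rw [← e1, ← e2, h]
    have hinj : ∀ P' ∈ Mk B' k, ∀ j1 ∈ Av r α P', ∀ j2 ∈ Av r α P',
        insert (r, j1) P' = insert (r, j2) P' → j1 = j2 := by
      intro P' hP' j1 hj1 j2 hj2 h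
      have h1 : (r, j1) ∈ insert (r, j2) P' := h ▸ Finset.mem_insert_self _ _
      rw [Finset.mem_insert] at h1
      rcases h1 with h1 | h1
      · exact congrArg Prod.snd h1
      · exact absurd rfl (hB'fst P' (mem_Mk.mp hP').1 _ h1)
    -- weight decomposition
    have hweight : ∀ P' ∈ Mk B' k, ∀ j ∈ Av r α P',
        (uncancelled (Bd s N ρ a) (insert (r, j) P')).card
          = (uncancelled B' P').card + ((Av r α P').filter fun x => j < x).card := by
      intro P' hP' j hj
      obtain ⟨hP'B, hP'card, hP'na⟩ := mem_Mk.mp hP'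
      rw [mem_Av] at hj
      obtain ⟨⟨hj1, hj2⟩, hjF⟩ := hj
      rw [uncancelled, hBsplit, Finset.filter_union,
        Finset.card_union_of_disjoint (Finset.disjoint_filter_filter hdisj), add_comm]
      congr 1
      · -- lower rows: cancellation is unchanged
        congr 1
        rw [uncancelled]
        apply Finset.filter_congr
        intro c hc
        have hcB := hB'cell c hc
        have hcne : c ≠ (r, j) := by
          intro h
          rw [h] at hcB
          simp only at hcB
          omega
        have hmem : (c ∈ insert (r, j) P') ↔ (c ∈ P') := by
          rw [Finset.mem_insert]
          exact or_iff_right hcne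
        have hcanc : cancelled (insert (r, j) P') c ↔ cancelled P' c := by
          unfold cancelled
          constructor
          · rintro ⟨d, hd, hrel⟩
            rw [Finset.mem_insert] at hd
            rcases hd with rfl | hd
            · exfalso
              rcases hrel with ⟨h1, -, -⟩ | ⟨h1, -⟩
              · simp only at h1; omega
              · simp only at h1; omega
            · exact ⟨d, hd, hrel⟩
          · rintro ⟨d, hd, hrel⟩
            exact ⟨d, Finset.mem_insert_of_mem hd, hrel⟩
        rw [hmem, hcanc]
      · -- top row: uncancelled cells are the available cells right of the rook
        have himg : ((rowB r α).filter fun c =>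
              c ∉ insert (r, j) P' ∧ ¬cancelled (insert (r, j) P') c)
            = ((Av r α P').filter fun x => j < x).image fun x => (r, x) := by
          ext c
          rw [Finset.mem_filter, Finset.mem_image]
          constructor
          · rintro ⟨hcrow, hcP, hcanc⟩
            obtain ⟨hc1, hc2, hc3⟩ := mem_rowB.mp hcrow
            refine ⟨c.2, ?_, ?_⟩
            · rw [Finset.mem_filter, mem_Av]
              have hnej : c.2 ≠ j := by
                intro h
                apply hcP
                rw [Finset.mem_insert]
                left
                obtain ⟨a1, a2⟩ := c
                simp only at hc1 h
                rw [hc1, h]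
              have hnlt : ¬ (c.2 < j) := by
                intro hlt
                exact hcanc ⟨(r, j), Finset.mem_insert_self _ _,
                  Or.inl ⟨hc1.symm, by simp only; omega, by simp only; omega⟩⟩
              have hF : ∀ d ∈ P', d.1 ≠ c.2 ∧ d.2 ≠ c.2 := by
                intro d hd
                have hdc := hB'cell d (hP'B hd)
                constructor <;> intro h <;> apply hcanc
                · exact ⟨d, Finset.mem_insert_of_mem hd, Or.inr ⟨by omega, Or.inr h.symm⟩⟩
                · exact ⟨d, Finset.mem_insert_of_mem hd, Or.inr ⟨by omega, Or.inl h.symm⟩⟩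
              exact ⟨⟨⟨by omega, by omega⟩, hF⟩, by omega⟩
            · rw [← hc1]
          · rintro ⟨x, hx, rfl⟩
            rw [Finset.mem_filter, mem_Av] at hx
            obtain ⟨⟨⟨hx1, hx2⟩, hxF⟩, hjx⟩ := hx
            refine ⟨mem_rowB.mpr ⟨rfl, by omega, by omega⟩, ?_, ?_⟩
            · rw [Finset.mem_insert]
              rintro (h | h)
              · have : x = j := congrArg Prod.snd h
                omega
              · exact hB'fst P' hP'B _ h rfl
            · rintro ⟨d, hd, hrel⟩
              rw [Finset.mem_insert] at hd
              rcases hd with rfl | hd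
              · rcases hrel with ⟨-, -, h3⟩ | ⟨h1, -⟩
                · simp only at h3; omega
                · simp only at h1; omega
              · have hdB := hB'cell d (hP'B hd)
                have hdF := hxF d hd
                rcases hrel with ⟨h1, -, -⟩ | ⟨-, h2 | h2⟩
                · simp only at h1; omega
                · exact hdF.2 (by simpa using h2.symm)
                · exact hdF.1 (by simpa using h2.symm)
        rw [himg, Finset.card_image_of_injOn]
        intro x _ y _ h
        exact congrArg Prod.snd h
    -- cardinality of the available set
    have hAvcard : ∀ P' ∈ Mk B' k, (Av r α P').card = α - 2*k ∧ 2*k ≤ α := by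
      intro P' hP'
      obtain ⟨hP'B, hP'card, hP'na⟩ := mem_Mk.mp hP'
      have hFsub : Fset P' ⊆ Finset.Icc (r+1) (r+α) := by
        intro x hx
        rw [Fset, Finset.mem_union, Finset.mem_image, Finset.mem_image] at hx
        rw [Finset.mem_Icc]
        rcases hx with ⟨d, hd, rfl⟩ | ⟨d, hd, rfl⟩ <;>
          · have := hB'cell d (hP'B hd); omega
      have hf1 : (P'.image Prod.fst).card = k := by
        rw [Finset.card_image_of_injOn, hP'card]
        intro c hc d hd h
        by_contra hne
        exact (hP'na c hc d hd hne).1 h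
      have hf2 : (P'.image Prod.snd).card = k := by
        rw [Finset.card_image_of_injOn, hP'card]
        intro c hc d hd h
        by_contra hne
        exact (hP'na c hc d hd hne).2.1 h
      have hdisjF : Disjoint (P'.image Prod.fst) (P'.image Prod.snd) := by
        rw [Finset.disjoint_left]
        rintro x hx1 hx2
        rw [Finset.mem_image] at hx1 hx2
        obtain ⟨d, hd, rfl⟩ := hx1
        obtain ⟨e, he, hexd⟩ := hx2
        by_cases hde : e = d
        · subst hde
          have := hB'cell e (hP'B he)
          omega
        · exact (hP'na e he d hd hde).2.2.1 hexd
      have hFcard : (Fset P').card = 2*k := by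
        rw [Fset, Finset.card_union_of_disjoint hdisjF, hf1, hf2]
        ring
      have hle2 : 2*k ≤ α := by
        have := Finset.card_le_card hFsub
        rw [hFcard, Nat.card_Icc] at this
        omega
      refine ⟨?_, hle2⟩
      rw [Av, Finset.card_sdiff_of_subset hFsub, hFcard, Nat.card_Icc]
      omega
    -- put everything together
    rw [mq, hdecomp, Finset.sum_biUnion hpair]
    have hsum1 : ∀ P' ∈ Mk B' k,
        (∑ P ∈ (Av r α P').image (fun j => insert (r, j) P'),
            q ^ (uncancelled (Bd s N ρ a) P).card)
          = qInt q ((α : ℤ) - 2*(k : ℤ)) * q ^ (uncancelled B' P').card := by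
      intro P' hP'
      rw [Finset.sum_image (hinj P' hP')]
      have hterm : ∀ j ∈ Av r α P', q ^ (uncancelled (Bd s N ρ a) (insert (r, j) P')).card
          = q ^ (uncancelled B' P').card * q ^ (((Av r α P').filter fun x => j < x).card) := by
        intro j hj
        rw [hweight P' hP' j hj, pow_add]
      rw [Finset.sum_congr rfl hterm, ← Finset.mul_sum, sumA q hq1 (Av r α P'),
        (hAvcard P' hP').1]
      have h2k := (hAvcard P' hP').2
      rw [show ((α - 2*k : ℕ) : ℤ) = (α : ℤ) - 2*(k : ℤ) by omega]
      ring
    rw [Finset.sum_congr rfl hsum1, ← Finset.mul_sum]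
    have hih := ih (s+1) (by omega) (by omega)
    have hmq : ∑ P' ∈ Mk B' k, q ^ (uncancelled B' P').card = mq q B' k := rfl
    rw [hmq, hih, Icc_insert hsN',
      Finset.prod_insert (by rw [Finset.mem_Icc]; omega)]
    have hcast : ((α : ℤ) - 2*(k : ℤ)) = (a (s+1) : ℤ) - 2 * ((N : ℤ) - ((s+1 : ℕ) : ℤ)) := by
      rw [← hα]
      push_cast
      omega
    rw [hcast]

lemma Lsum_mono (l : ℕ → ℕ) {u v : ℕ} (h : u ≤ v) : Lsum l u ≤ Lsum l v :=
  Finset.sum_le_sum_of_subset (Finset.Icc_subset_Icc_right h)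

lemma Lsum_succ (l : ℕ → ℕ) (t : ℕ) : Lsum l (t+1) = Lsum l t + l (t+1) := by
  rw [Lsum, Lsum, Finset.sum_Icc_succ_top (by omega)]

lemma Lsum_strict (l : ℕ → ℕ) {N u v : ℕ} (hl : ∀ i, 1 ≤ i → i ≤ N → 1 ≤ l i)
    (h : u < v) (hv : v ≤ N) : Lsum l u < Lsum l v := by
  have h1 : Lsum l (u+1) ≤ Lsum l v := Lsum_mono l (by omega)
  have h2 := Lsum_succ l u
  have h3 := hl (u+1) (by omega) (by omega)
  omega

lemma main1 (q : ℂ) (hq1 : q ≠ 1) (N : ℕ) (l A : ℕ → ℕ)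
    (hl : ∀ i, 1 ≤ i → i ≤ N → 1 ≤ l i)
    (hanti : ∀ i, 1 ≤ i → i + 1 ≤ N → A (i + 1) ≤ A i)
    (hgap : ∀ i, 1 ≤ i → i + 1 ≤ N → A (i + 1) ≠ 0 → l (N + 1 - i) + A (i + 1) ≤ A i) :
    mq q (lFerrers N l A) N
      = ∏ i ∈ Finset.Icc 1 N, qInt q ((A (N - i + 1) : ℤ) - 2 * (i : ℤ) + 2) := by
  set ρ : ℕ → ℕ := fun i => Lsum l N - Lsum l (N - i + 1) + 1 with hρ
  have hBd : lFerrers N l A = Bd 0 N ρ A := by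
    rw [lFerrers, Bd]
    rfl
  by_cases hA : 1 ≤ N ∧ A N = 0
  · -- degenerate case: the shortest row is empty, both sides vanish
    obtain ⟨hN1, hAN⟩ := hA
    have hMk : Mk (lFerrers N l A) N = ∅ := by
      rw [Finset.eq_empty_iff_forall_notMem]
      intro P hP
      obtain ⟨hPB, hPcard, hPna⟩ := mem_Mk.mp hP
      rw [hBd] at hPB
      have h1 := card_nonatt_le P hPB hPna
      have h2 : ((Finset.Icc (0+1) N).filter fun i => 1 ≤ A i) ⊆ Finset.Icc 1 (N-1) := by
        intro i hi
        rw [Finset.mem_filter, Finset.mem_Icc] at hi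
        rw [Finset.mem_Icc]
        obtain ⟨⟨hi1, hi2⟩, hi3⟩ := hi
        have hiN : i ≠ N := by rintro rfl; omega
        omega
      have h3 := Finset.card_le_card h2
      rw [Nat.card_Icc] at h3
      omega
    rw [mq, hMk, Finset.sum_empty]
    symm
    apply Finset.prod_eq_zero (Finset.mem_Icc.mpr ⟨le_refl 1, hN1⟩)
    rw [show N - 1 + 1 = N by omega, hAN]
    rw [show ((0 : ℕ) : ℤ) - 2 * ((1 : ℕ) : ℤ) + 2 = 0 by norm_num]
    exact qInt_zero q
  · -- main case
    have hapos : ∀ i, 1 ≤ i → i ≤ N → 1 ≤ A i := by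
      have hchain : ∀ d i, 1 ≤ i → i + d ≤ N → A (i + d) ≤ A i := by
        intro d
        induction d with
        | zero => intro i _ _; exact le_refl _
        | succ d hd =>
          intro i h1 h2
          calc A (i + (d+1)) = A ((i+d) + 1) := by ring_nf
            _ ≤ A (i + d) := hanti (i+d) (by omega) (by omega)
            _ ≤ A i := hd i h1 (by omega)
      intro i h1 h2
      have hAN : 1 ≤ A N := by
        by_contra h
        exact hA ⟨by omega, by omega⟩
      have := hchain (N - i) i h1 (by omega)
      rw [show i + (N - i) = N by omega] at this
      omega
    have hmono : ∀ i j, 1 ≤ i → i < j → j ≤ N → ρ i < ρ j := by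
      intro i j h1 h2 h3
      have e1 : Lsum l (N - j + 1) < Lsum l (N - i + 1) := Lsum_strict l hl (by omega) (by omega)
      have e2 : Lsum l (N - i + 1) ≤ Lsum l N := Lsum_mono l (by omega)
      simp only [hρ]
      omega
    have hnest1 : ∀ i, 1 ≤ i → i + 1 ≤ N → ρ (i+1) + A (i+1) ≤ ρ i + A i := by
      intro i h1 h2
      have e1 : Lsum l (N - i + 1) = Lsum l (N - i) + l (N - i + 1) := Lsum_succ l (N - i)
      have e2 := hgap i h1 h2 (by have := hapos (i+1) (by omega) h2; omega)
      have e3 : l (N + 1 - i) = l (N - i + 1) := by congr 1; omega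
      have e4 : Lsum l (N - (i+1) + 1) = Lsum l (N - i) := by congr 1; omega
      have e5 : Lsum l (N - i + 1) ≤ Lsum l N := Lsum_mono l (by omega)
      have e6 : Lsum l (N - i) ≤ Lsum l (N - i + 1) := Lsum_mono l (by omega)
      simp only [hρ]
      omega
    have hnest : ∀ i j, 1 ≤ i → i < j → j ≤ N → ρ j + A j ≤ ρ i + A i := by
      have hchain : ∀ d i, 1 ≤ i → i + d ≤ N → ρ (i + d) + A (i + d) ≤ ρ i + A i := by
        intro d
        induction d with
        | zero => intro i _ _; exact le_refl _
        | succ d hd =>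
          intro i h1 h2
          have h3 : ρ ((i+d)+1) + A ((i+d)+1) ≤ ρ (i+d) + A (i+d) :=
            hnest1 (i+d) (by omega) (by omega)
          have h4 := hd i h1 (by omega)
          calc ρ (i + (d+1)) + A (i + (d+1)) = ρ ((i+d)+1) + A ((i+d)+1) := by ring_nf
            _ ≤ ρ (i+d) + A (i+d) := h3
            _ ≤ ρ i + A i := h4
      intro i j h1 h2 h3
      have := hchain (j - i) i h1 (by omega)
      rw [show i + (j - i) = j by omega] at this
      exact this
    have hc := core q hq1 N ρ A hmono hnest hapos N 0 (by omega) (by omega)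
    rw [hBd, hc]
    apply Finset.prod_bij' (fun i _ => N + 1 - i) (fun i _ => N + 1 - i)
    · intro i hi
      rw [Finset.mem_Icc] at hi ⊢
      omega
    · intro i hi
      rw [Finset.mem_Icc] at hi ⊢
      omega
    · intro i hi
      rw [Finset.mem_Icc] at hi
      omega
    · intro i hi
      rw [Finset.mem_Icc] at hi
      omega
    · intro i hi
      rw [Finset.mem_Icc] at hi
      rw [show N - (N + 1 - i) + 1 = i by omega]
      congr 1
      omega

/-- Product formula for `m_N^{(l)}(q;B)`, and its specialization to the full board. -/
theorem lazy_matching_top (q : ℂ) (hq : q ≠ 0) (hq1 : q ≠ 1)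
    (N : ℕ) (l A : ℕ → ℕ)
    (hl : ∀ i, 1 ≤ i → i ≤ N → 1 ≤ l i)
    (hanti : ∀ i, 1 ≤ i → i + 1 ≤ N → A (i + 1) ≤ A i)
    (hle : ∀ i, 1 ≤ i → i ≤ N → A i ≤ Lsum l (N - i + 1))
    (hgap : ∀ i, 1 ≤ i → i + 1 ≤ N → A (i + 1) ≠ 0 → l (N + 1 - i) + A (i + 1) ≤ A i) :
    mq q (lFerrers N l A) N
        = ∏ i ∈ Finset.Icc 1 N, qInt q ((A (N - i + 1) : ℤ) - 2 * (i : ℤ) + 2)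
      ∧ mq q (lFerrers N l (fun i => Lsum l (N - i + 1))) N
        = ∏ i ∈ Finset.Icc 1 N, qInt q ((Lsum l i : ℤ) - 2 * (i : ℤ) + 2) := by
  constructor
  · exact main1 q hq1 N l A hl hanti hgap
  · have h2 := main1 q hq1 N l (fun i => Lsum l (N - i + 1)) hl
      (by
        intro i h1 h2
        exact Lsum_mono l (by omega))
      (by
        intro i h1 h2 _
        have e1 : Lsum l (N - i + 1) = Lsum l (N - i) + l (N - i + 1) := Lsum_succ l (N - i)
        have e3 : l (N + 1 - i) = l (N - i + 1) := by congr 1; omega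
        have e4 : Lsum l (N - (i+1) + 1) = Lsum l (N - i) := by congr 1; omega
        omega)
    rw [h2]
    apply Finset.prod_congr rfl
    intro i hi
    rw [Finset.mem_Icc] at hi
    rw [show N - (N - i + 1) + 1 = i by omega]

end EllRook
end
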